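/- For every prime p > 3, the sum over k from 0 to p-1 of binom(2k,k)^2 / 16^k is congruent to (-1)^((p-1)/2) modulo p^2 (i.e., to the Legendre symbol (-1/p)). -/

import Mathlib

open Finset Nat
open scoped Nat

private lemma prod_one_add_aux {R : Type*} [CommRing R] {ε : R} (hε : ε * ε = 0)
    (v : ℕ → R) (n : ℕ) :
    ∏ i ∈ range n, (1 + ε * v i) = 1 + ε * ∑ i ∈ range n, v i := by
  induction n with
  | zero => simp
  | succ n ih =>
    rw [prod_range_succ, ih, sum_range_succ]
    linear_combination (∑ i ∈ range n, v i) * v n * hε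

private lemma two_mul_factorial_aux (k : ℕ) :
    (2 * k) ! = 2 ^ k * k ! * ∏ j ∈ range k, (2 * j + 1) := by
  induction k with
  | zero => simp
  | succ k ih =>
    have h2 : 2 * (k + 1) = 2 * k + 1 + 1 := by ring
    rw [h2, Nat.factorial_succ, Nat.factorial_succ, ih, prod_range_succ,
      Nat.factorial_succ, pow_succ]
    ring

theorem rodriguez_villegas_16 (p : ℕ) (hp : p.Prime) (hp3 : 3 < p) :
    (∑ k ∈ Finset.range p,
      ((Nat.choose (2 * k) k : ZMod (p ^ 2)) ^ 2 * ((16 : ZMod (p ^ 2))⁻¹) ^ k))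
      = (-1) ^ ((p - 1) / 2) := by
  haveI : Fact p.Prime := ⟨hp⟩
  have hp5 : 5 ≤ p := by
    by_contra h
    have : p = 4 := by omega
    rw [this] at hp
    norm_num at hp
  haveI : NeZero (p ^ 2) := ⟨by positivity⟩
  obtain ⟨a, ha⟩ : ∃ a, p = 2 * a + 1 := by
    obtain ⟨a, ha⟩ := hp.odd_of_ne_two (by omega)
    exact ⟨a, by omega⟩
  have ha2 : 2 ≤ a := by omega
  have hap : a < p := by omega
  set R := ZMod (p ^ 2) with hR
  set m := a * p + a with hmdef
  have hm2 : 2 * m + 1 = p ^ 2 := by rw [hmdef, ha]; ring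
  have hma : (p - 1) / 2 = a := by omega
  have hpm : p ≤ m := by
    have h1 : 1 * p ≤ a * p := Nat.mul_le_mul_right p (by omega)
    omega
  -- basic ring facts in R
  have hε : (p : R) * (p : R) = 0 := by
    have : ((p * p : ℕ) : R) = 0 := by
      rw [show p * p = p ^ 2 by ring]
      exact ZMod.natCast_self _
    push_cast (config := {zetaDelta := true}) at this
    exact this
  have hunit : ∀ n : ℕ, ¬ p ∣ n → IsUnit ((n : ℕ) : R) := by
    intro n hn
    exact (ZMod.isUnit_iff_coprime n (p ^ 2)).mpr
      (Nat.Coprime.pow_left 2 ((Nat.Prime.coprime_iff_not_dvd hp).mpr hn)).symm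
  have hfac_unit : ∀ k : ℕ, k < p → IsUnit ((k ! : ℕ) : R) := by
    intro k hk
    refine hunit _ (fun h => ?_)
    have := (Nat.Prime.dvd_factorial hp).mp h
    omega
  -- step A: rewrite each summand
  have key : ∀ k, k < p → (((2 * k).choose k : ℕ) : R) = (-4) ^ k * ((m.choose k : ℕ) : R) := by
    intro k hk
    have hkm : k ≤ m := by omega
    have h1 : (2 * k).choose k * (k ! * k !) = (2 * k) ! := by
      have h := Nat.choose_mul_factorial_mul_factorial (show k ≤ 2 * k by omega)
      rw [show 2 * k - k = k by omega] at h
      rw [← h]; ring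
    have hfact : ∀ j ∈ range k, ((2 * j + 1 : ℕ) : R) = (-2) * ((m - j : ℕ) : R) := by
      intro j hj
      rw [mem_range] at hj
      rw [Nat.cast_sub (by omega : j ≤ m)]
      have h2m : ((2 * m + 1 : ℕ) : R) = 0 := by
        rw [hm2]; exact ZMod.natCast_self _
      push_cast (config := {zetaDelta := true}) at h2m ⊢
      linear_combination h2m
    have hprod : ∏ j ∈ range k, ((2 * j + 1 : ℕ) : R)
        = (-2) ^ k * ((m.descFactorial k : ℕ) : R) := by
      rw [prod_congr rfl hfact, prod_mul_distrib, prod_const, card_range,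
        Nat.descFactorial_eq_prod_range, Nat.cast_prod]
    have hchain : (((2 * k).choose k : ℕ) : R) * (((k ! : ℕ) : R) * ((k ! : ℕ) : R))
        = ((-4) ^ k * ((m.choose k : ℕ) : R)) * (((k ! : ℕ) : R) * ((k ! : ℕ) : R)) := by
      have e1 : (((2 * k).choose k * (k ! * k !) : ℕ) : R) = (((2 * k) ! : ℕ) : R) := by
        rw [h1]
      have e2 : (((2 * k) ! : ℕ) : R)
          = 2 ^ k * ((k ! : ℕ) : R) * ∏ j ∈ range k, ((2 * j + 1 : ℕ) : R) := by
        rw [two_mul_factorial_aux k]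
        push_cast (config := {zetaDelta := true})
        ring
      have e3 : ((m.descFactorial k : ℕ) : R) = ((k ! : ℕ) : R) * ((m.choose k : ℕ) : R) := by
        rw [Nat.descFactorial_eq_factorial_mul_choose]
        push_cast (config := {zetaDelta := true})
        ring
      have e4 : ((-2 : R)) ^ k * 2 ^ k = (-4 : R) ^ k := by
        rw [← mul_pow]; norm_num
      push_cast (config := {zetaDelta := true}) at e1
      rw [e1, e2, hprod, e3]
      linear_combination (((k ! : ℕ) : R)) ^ 2 * ((m.choose k : ℕ) : R) * e4
    exact ((hfac_unit k hk).mul ((hfac_unit k hk))).mul_right_cancel hchain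
  have h16u : IsUnit (16 : R) := by
    have h : (16 : R) = ((16 : ℕ) : R) := by norm_num
    rw [h]
    refine hunit 16 (fun hd => ?_)
    have h2 : p ∣ 2 := hp.dvd_of_dvd_pow (show p ∣ 2 ^ 4 by norm_num at hd ⊢; exact hd)
    have := Nat.le_of_dvd (by norm_num) h2
    omega
  have stepA : ∀ k ∈ range p,
      (((2 * k).choose k : ℕ) : R) ^ 2 * ((16 : R)⁻¹) ^ k = ((m.choose k : ℕ) : R) ^ 2 := by
    intro k hk
    rw [mem_range] at hk
    rw [key k hk]
    have h16 : (16 : R) * (16 : R)⁻¹ = 1 := ZMod.mul_inv_of_unit _ h16u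
    have e : ((-4 : R) ^ k) ^ 2 = (16 : R) ^ k := by
      rw [← pow_mul, mul_comm k 2, pow_mul]
      norm_num
    calc ((-4 : R) ^ k * ((m.choose k : ℕ) : R)) ^ 2 * ((16 : R)⁻¹) ^ k
        = ((-4 : R) ^ k) ^ 2 * ((m.choose k : ℕ) : R) ^ 2 * ((16 : R)⁻¹) ^ k := by ring
      _ = ((m.choose k : ℕ) : R) ^ 2 * ((16 : R) * (16 : R)⁻¹) ^ k := by
          rw [e, mul_pow]; ring
      _ = ((m.choose k : ℕ) : R) ^ 2 := by rw [h16, one_pow, mul_one]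
  -- tail vanishes
  have htail : ∀ k ∈ Ico (a + 1) p, ((m.choose k : ℕ) : R) ^ 2 = 0 := by
    intro k hk
    rw [mem_Ico] at hk
    have hdp : p ∣ m.descFactorial k := by
      rw [Nat.descFactorial_eq_prod_range]
      have h1 : p ∣ m - a := ⟨a, by rw [hmdef, Nat.add_sub_cancel, mul_comm]⟩
      exact h1.trans (Finset.dvd_prod_of_mem _ (mem_range.mpr (by omega : a < k)))
    rw [Nat.descFactorial_eq_factorial_mul_choose] at hdp
    have h2 : p ∣ m.choose k := by
      rcases (Nat.Prime.dvd_mul hp).mp hdp with h | h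
      · have := (Nat.Prime.dvd_factorial hp).mp h
        omega
      · exact h
    obtain ⟨t, ht⟩ := h2
    rw [ht]
    push_cast (config := {zetaDelta := true})
    linear_combination ((t : ℕ) : R) * ((t : ℕ) : R) * hε
  -- head: pointwise relation modulo (p^2)
  have headC : ∀ k ∈ range (a + 1), ((m.choose k : ℕ) : R) ^ 2
      = 2 * ((m.choose k : ℕ) : R) * ((a.choose k : ℕ) : R) - ((a.choose k : ℕ) : R) ^ 2 := by
    intro k hk
    rw [mem_range] at hk
    have hka : k ≤ a := by omega
    have hmodp : ((m.choose k : ℕ) : ZMod p) = ((a.choose k : ℕ) : ZMod p) := by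
      have hd : ((m.descFactorial k : ℕ) : ZMod p) = ((a.descFactorial k : ℕ) : ZMod p) := by
        rw [Nat.descFactorial_eq_prod_range, Nat.descFactorial_eq_prod_range,
          Nat.cast_prod, Nat.cast_prod]
        refine prod_congr rfl (fun i hi => ?_)
        rw [mem_range] at hi
        have h1 : m - i = a * p + (a - i) := by omega
        rw [h1, Nat.cast_add, Nat.cast_mul, ZMod.natCast_self, mul_zero, zero_add]
      rw [Nat.descFactorial_eq_factorial_mul_choose,
        Nat.descFactorial_eq_factorial_mul_choose, Nat.cast_mul, Nat.cast_mul] at hd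
      have hu : IsUnit ((k ! : ℕ) : ZMod p) := by
        rw [ZMod.isUnit_iff_coprime]
        refine ((Nat.Prime.coprime_iff_not_dvd hp).mpr (fun h => ?_)).symm
        have := (Nat.Prime.dvd_factorial hp).mp h
        omega
      exact hu.mul_left_cancel hd
    have hdvd : (p : ℤ) ∣ (m.choose k : ℤ) - (a.choose k : ℤ) := by
      rw [← ZMod.intCast_zmod_eq_zero_iff_dvd]
      push_cast
      rw [sub_eq_zero]
      exact_mod_cast hmodp
    obtain ⟨t, ht⟩ := hdvd
    have htR : ((m.choose k : ℕ) : R) - ((a.choose k : ℕ) : R) = (p : R) * ((t : ℤ) : R) := by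
      have h3 := congrArg (fun z : ℤ => ((z : ℤ) : R)) ht
      push_cast (config := {zetaDelta := true}) at h3
      exact h3
    linear_combination (((m.choose k : ℕ) : R) - ((a.choose k : ℕ) : R)
      + (p : R) * ((t : ℤ) : R)) * htR + ((t : ℤ) : R) * ((t : ℤ) : R) * hε
  -- Vandermonde evaluations
  have hV1 : ∑ k ∈ range (a + 1), ((m.choose k : ℕ) : R) * ((a.choose k : ℕ) : R)
      = (((m + a).choose a : ℕ) : R) := by
    have h := Nat.add_choose_eq m a a
    rw [Finset.Nat.sum_antidiagonal_eq_sum_range_succ_mk] at h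
    rw [h]
    push_cast (config := {zetaDelta := true})
    refine sum_congr rfl (fun k hk => ?_)
    rw [mem_range] at hk
    rw [Nat.choose_symm (by omega : k ≤ a)]
  have hV2 : ∑ k ∈ range (a + 1), ((a.choose k : ℕ) : R) * ((a.choose k : ℕ) : R)
      = (((2 * a).choose a : ℕ) : R) := by
    have h := Nat.add_choose_eq a a a
    rw [Finset.Nat.sum_antidiagonal_eq_sum_range_succ_mk] at h
    rw [show 2 * a = a + a by ring, h]
    push_cast (config := {zetaDelta := true})
    refine sum_congr rfl (fun k hk => ?_)
    rw [mem_range] at hk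
    rw [Nat.choose_symm (by omega : k ≤ a)]
  -- epsilon expansions
  have hfuD : ∀ i, i < a → IsUnit (((2 * a - i : ℕ)) : R) := by
    intro i hi
    refine hunit _ (fun h => ?_)
    have := Nat.le_of_dvd (by omega) h
    omega
  set Sa := ∑ i ∈ range a, (a : R) * (((2 * a - i : ℕ)) : R)⁻¹ with hSa
  set V := ∑ i ∈ range a, (-(((i + 1 : ℕ)) : R))⁻¹ with hV
  have hprodD : ∏ i ∈ range a, (((m + a - i : ℕ)) : R)
      = (∏ i ∈ range a, (((2 * a - i : ℕ)) : R)) * (1 + (p : R) * Sa) := by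
    have hstep : ∀ i ∈ range a, (((m + a - i : ℕ)) : R)
        = (((2 * a - i : ℕ)) : R) * (1 + (p : R) * ((a : R) * (((2 * a - i : ℕ)) : R)⁻¹)) := by
      intro i hi
      rw [mem_range] at hi
      have h1 : m + a - i = a * p + (2 * a - i) := by omega
      have hfi : (((2 * a - i : ℕ)) : R) * (((2 * a - i : ℕ)) : R)⁻¹ = 1 :=
        ZMod.mul_inv_of_unit _ (hfuD i hi)
      rw [h1, Nat.cast_add, Nat.cast_mul]
      linear_combination (-((p : R) * (a : R))) * hfi
    rw [prod_congr rfl hstep, prod_mul_distrib,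
      prod_one_add_aux hε (fun i => (a : R) * (((2 * a - i : ℕ)) : R)⁻¹) a, hSa]
  have χeq : (((m + a).choose a : ℕ) : R)
      = (((2 * a).choose a : ℕ) : R) * (1 + (p : R) * Sa) := by
    have hmain : ((a ! : ℕ) : R) * (((m + a).choose a : ℕ) : R)
        = ((a ! : ℕ) : R) * ((((2 * a).choose a : ℕ) : R) * (1 + (p : R) * Sa)) := by
      have e1 : ((a ! * (m + a).choose a : ℕ) : R) = ∏ i ∈ range a, (((m + a - i : ℕ)) : R) := by
        rw [← Nat.descFactorial_eq_factorial_mul_choose, Nat.descFactorial_eq_prod_range,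
          Nat.cast_prod]
      have e2 : ((a ! * (2 * a).choose a : ℕ) : R) = ∏ i ∈ range a, (((2 * a - i : ℕ)) : R) := by
        rw [← Nat.descFactorial_eq_factorial_mul_choose, Nat.descFactorial_eq_prod_range,
          Nat.cast_prod]
      rw [Nat.cast_mul] at e1 e2
      rw [e1, hprodD, ← e2]
      ring
    exact (hfac_unit a hap).mul_left_cancel hmain
  have Cbeq : (((2 * a).choose a : ℕ) : R) = (-1) ^ a * (1 + (p : R) * V) := by
    have hstep : ∀ i ∈ range a, (((2 * a - i : ℕ)) : R)
        = (-(((i + 1 : ℕ)) : R)) * (1 + (p : R) * (-(((i + 1 : ℕ)) : R))⁻¹) := by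
      intro i hi
      rw [mem_range] at hi
      have hui : IsUnit (-(((i + 1 : ℕ)) : R)) := by
        refine IsUnit.neg (hunit (i + 1) (fun h => ?_))
        have := Nat.le_of_dvd (by omega) h
        omega
      have hgi : (-(((i + 1 : ℕ)) : R)) * (-(((i + 1 : ℕ)) : R))⁻¹ = 1 :=
        ZMod.mul_inv_of_unit _ hui
      have h1 : 2 * a - i = p - (i + 1) := by omega
      rw [h1, Nat.cast_sub (by omega : i + 1 ≤ p)]
      push_cast at hgi ⊢
      linear_combination (-(p : R)) * hgi
    have hprodE : ∏ i ∈ range a, (((2 * a - i : ℕ)) : R)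
        = ((-1) ^ a * ((a ! : ℕ) : R)) * (1 + (p : R) * V) := by
      rw [prod_congr rfl hstep, prod_mul_distrib,
        prod_one_add_aux hε (fun i => (-(((i + 1 : ℕ)) : R))⁻¹) a, hV]
      congr 1
      calc ∏ i ∈ range a, (-(((i + 1 : ℕ)) : R))
          = ∏ i ∈ range a, ((-1) * (((i + 1 : ℕ)) : R)) := prod_congr rfl (fun i _ => by ring)
        _ = (-1) ^ a * ∏ i ∈ range a, (((i + 1 : ℕ)) : R) := by
            rw [prod_mul_distrib, prod_const, card_range]
        _ = (-1) ^ a * ((a ! : ℕ) : R) := by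
            rw [← Nat.cast_prod]
            norm_num [prod_range_add_one_eq_factorial]
    have hmain : ((a ! : ℕ) : R) * (((2 * a).choose a : ℕ) : R)
        = ((a ! : ℕ) : R) * ((-1) ^ a * (1 + (p : R) * V)) := by
      have e2 : ((a ! * (2 * a).choose a : ℕ) : R) = ∏ i ∈ range a, (((2 * a - i : ℕ)) : R) := by
        rw [← Nat.descFactorial_eq_factorial_mul_choose, Nat.descFactorial_eq_prod_range,
          Nat.cast_prod]
      rw [Nat.cast_mul] at e2
      rw [e2, hprodE]
      ring
    exact (hfac_unit a hap).mul_left_cancel hmain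
  -- the epsilon part vanishes
  have heps0 : ∀ x : ZMod (p ^ 2),
      (ZMod.castHom (dvd_pow_self p two_ne_zero) (ZMod p)) x = 0 → (p : R) * x = 0 := by
    intro x hx
    have hv : ((x.val : ℕ) : ZMod (p ^ 2)) = x := ZMod.natCast_zmod_val x
    have hdvd : p ∣ x.val := by
      rw [← hv, map_natCast, ZMod.natCast_eq_zero_iff] at hx
      exact hx
    obtain ⟨t, ht⟩ := hdvd
    have : (p : R) * x = (p : R) * (((p * t : ℕ)) : R) := by
      rw [← ht]
      exact congrArg _ hv.symm
    rw [this]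
    push_cast (config := {zetaDelta := true})
    linear_combination ((t : ℕ) : R) * hε
  have hφinv : ∀ x : ZMod (p ^ 2), IsUnit x →
      (ZMod.castHom (dvd_pow_self p two_ne_zero) (ZMod p)) x⁻¹
      = ((ZMod.castHom (dvd_pow_self p two_ne_zero) (ZMod p)) x)⁻¹ := by
    intro x hx
    have h1 : x * x⁻¹ = 1 := ZMod.mul_inv_of_unit x hx
    have h2 : (ZMod.castHom (dvd_pow_self p two_ne_zero) (ZMod p)) x
        * (ZMod.castHom (dvd_pow_self p two_ne_zero) (ZMod p)) x⁻¹ = 1 := by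
      rw [← map_mul, h1, map_one]
    exact (inv_eq_of_mul_eq_one_right h2).symm
  have hkill : (p : R) * (V + 2 * Sa) = 0 := by
    apply heps0
    have hpz : ((2 * a + 1 : ℕ) : ZMod p) = 0 := by
      rw [← ha]
      exact ZMod.natCast_self p
    push_cast at hpz
    rw [map_add, map_mul, hV, hSa, map_sum, map_sum, map_ofNat]
    have hφV : ∀ i ∈ range a,
        (ZMod.castHom (dvd_pow_self p two_ne_zero) (ZMod p)) ((-(((i + 1 : ℕ)) : R))⁻¹)
        = (-(((i + 1 : ℕ)) : ZMod p))⁻¹ := by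
      intro i hi
      rw [mem_range] at hi
      have hui : IsUnit (-(((i + 1 : ℕ)) : R)) := by
        refine IsUnit.neg (hunit (i + 1) (fun h => ?_))
        have := Nat.le_of_dvd (by omega) h
        omega
      rw [hφinv _ hui, map_neg, map_natCast]
    have hφS : ∀ i ∈ range a,
        (ZMod.castHom (dvd_pow_self p two_ne_zero) (ZMod p)) ((a : R) * (((2 * a - i : ℕ)) : R)⁻¹)
        = (a : ZMod p) * (((2 * a - i : ℕ)) : ZMod p)⁻¹ := by
      intro i hi
      rw [mem_range] at hi
      rw [map_mul, map_natCast, hφinv _ (hfuD i hi), map_natCast]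
    rw [sum_congr rfl hφV, sum_congr rfl hφS, mul_sum, ← sum_add_distrib]
    refine sum_eq_zero (fun i hi => ?_)
    rw [mem_range] at hi
    have hcast : (((2 * a - i : ℕ)) : ZMod p) = -(((i + 1 : ℕ)) : ZMod p) := by
      rw [show 2 * a - i = p - (i + 1) by omega, Nat.cast_sub (by omega : i + 1 ≤ p),
        ZMod.natCast_self]
      push_cast
      ring
    rw [hcast]
    push_cast
    linear_combination (-(((i : ZMod p) + 1)))⁻¹ * hpz
  -- final assembly
  rw [hma]
  calc (∑ k ∈ Finset.range p,
        ((Nat.choose (2 * k) k : ZMod (p ^ 2)) ^ 2 * ((16 : ZMod (p ^ 2))⁻¹) ^ k))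
      = ∑ k ∈ range p, ((m.choose k : ℕ) : R) ^ 2 := sum_congr rfl stepA
    _ = (∑ k ∈ range (a + 1), ((m.choose k : ℕ) : R) ^ 2)
        + ∑ k ∈ Ico (a + 1) p, ((m.choose k : ℕ) : R) ^ 2 := by
        rw [range_eq_Ico, ← sum_Ico_consecutive _ (Nat.zero_le (a + 1))
          (show a + 1 ≤ p by omega), ← range_eq_Ico]
    _ = ∑ k ∈ range (a + 1), ((m.choose k : ℕ) : R) ^ 2 := by
        rw [sum_eq_zero htail, add_zero]
    _ = 2 * (((m + a).choose a : ℕ) : R) - (((2 * a).choose a : ℕ) : R) := by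
        rw [sum_congr rfl headC]
        have e : ∀ k ∈ range (a + 1),
            2 * ((m.choose k : ℕ) : R) * ((a.choose k : ℕ) : R) - ((a.choose k : ℕ) : R) ^ 2
            = 2 * (((m.choose k : ℕ) : R) * ((a.choose k : ℕ) : R))
              - ((a.choose k : ℕ) : R) * ((a.choose k : ℕ) : R) := fun k _ => by ring
        rw [sum_congr rfl e, sum_sub_distrib, ← mul_sum, hV1, hV2]
    _ = (-1) ^ a := by
        linear_combination (2 : R) * χeq + (1 + 2 * (p : R) * Sa) * Cbeq
          + ((-1 : R)) ^ a * hkill + ((-1 : R)) ^ a * 2 * Sa * V * hε
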